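/- arXiv:1110.6759 — 3 statements merged into one kernel-verified Lean document; each statement's English description precedes it below -/
import Mathlib

section
/- The infinite series ∑_{k=1}^∞ (k+1)!/(2k+1)!! converges to π/2. -/
open Filter Finset Real MeasureTheory intervalIntegral

lemma beta_nat : ∀ (b a : ℕ), (∫ x in (0:ℝ)..1, x ^ a * (1 - x) ^ b)
    = (a.factorial * b.factorial : ℝ) / ((a + b + 1).factorial) := by
  intro b
  induction b with
  | zero =>
      intro a
      simp only [pow_zero, mul_one, integral_pow]
      rw [Nat.factorial_succ]
      push_cast
      rw [one_pow, zero_pow (by omega)]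
      field_simp
      simp
  | succ b ih =>
      intro a
      have hF : ∀ x ∈ Set.uIcc (0:ℝ) 1, HasDerivAt
          (fun x : ℝ => x ^ (a+1) * (1 - x) ^ (b+1))
          (((a:ℝ)+1) * x ^ a * (1-x)^(b+1) - ((b:ℝ)+1) * x^(a+1) * (1-x)^b) x := by
        intro x _
        have h1 : HasDerivAt (fun x : ℝ => x ^ (a+1)) (((a:ℝ)+1) * x ^ a) x := by
          simpa using hasDerivAt_pow (a+1) x
        have h2 : HasDerivAt (fun x : ℝ => (1 - x) ^ (b+1)) (-(((b:ℝ)+1) * (1-x)^b)) x := by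
          have hi : HasDerivAt (fun x : ℝ => 1 - x) (-1) x := by
            simpa using (hasDerivAt_id x).const_sub 1
          have := (hasDerivAt_pow (b+1) (1-x)).comp x hi
          simpa [Function.comp_def] using this
        have := h1.mul h2
        refine this.congr_deriv ?_
        push_cast
        ring
      have hInt : IntervalIntegrable (fun x : ℝ =>
          ((a:ℝ)+1) * x ^ a * (1-x)^(b+1) - ((b:ℝ)+1) * x^(a+1) * (1-x)^b) volume 0 1 := by
        apply Continuous.intervalIntegrable
        fun_prop
      have key := integral_eq_sub_of_hasDerivAt hF hInt
      simp only [one_pow, zero_pow (Nat.succ_ne_zero a), zero_pow (Nat.succ_ne_zero b), sub_zero,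
        sub_self, one_mul, zero_mul, mul_one, mul_zero] at key
      have h1i : IntervalIntegrable (fun x : ℝ => ((a:ℝ)+1) * (x ^ a * (1-x)^(b+1))) volume 0 1 := by
        apply Continuous.intervalIntegrable; fun_prop
      have h2i : IntervalIntegrable (fun x : ℝ => ((b:ℝ)+1) * (x ^ (a+1) * (1-x)^b)) volume 0 1 := by
        apply Continuous.intervalIntegrable; fun_prop
      rw [show (fun x : ℝ => ((a:ℝ)+1) * x ^ a * (1-x)^(b+1) - ((b:ℝ)+1) * x^(a+1) * (1-x)^b)
          = (fun x : ℝ => ((a:ℝ)+1) * (x ^ a * (1-x)^(b+1)) - ((b:ℝ)+1) * (x^(a+1) * (1-x)^b))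
          by funext x; ring] at key
      rw [integral_sub h1i h2i, intervalIntegral.integral_const_mul, intervalIntegral.integral_const_mul, ih (a+1), sub_eq_zero] at key
      have ha1 : ((a:ℝ)+1) ≠ 0 := by positivity
      have key2 : (∫ x in (0:ℝ)..1, x ^ a * (1 - x) ^ (b+1))
          = (((b:ℝ)+1) * ((a+1).factorial * b.factorial / ((a + 1 + b + 1).factorial))) / ((a:ℝ)+1) := by
        field_simp at key ⊢
        linarith [key]
      rw [key2, show a+1+b+1 = a+(b+1)+1 from by omega, Nat.factorial_succ a,
        Nat.factorial_succ b]
      push_cast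
      have h3 : (((a+(b+1)+1).factorial : ℝ)) ≠ 0 := by positivity
      field_simp

lemma Qpos (x : ℝ) : 0 < 2*x^2 - 2*x + 1 := by nlinarith [sq_nonneg (2*x-1)]

lemma ftc_int : ∫ x in (0:ℝ)..1, (2*x^2 - 2*x + 1)⁻¹ ^ 2 = 1 + π/2 := by
  have hG : ∀ x ∈ Set.uIcc (0:ℝ) 1, HasDerivAt
      (fun x : ℝ => (2*x-1)/(2*(2*x^2-2*x+1)) + arctan (2*x-1))
      ((2*x^2 - 2*x + 1)⁻¹ ^ 2) x := by
    intro x _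
    have hQ : (2*x^2 - 2*x + 1) ≠ 0 := (Qpos x).ne'
    have hQQ : (2*(2*x^2 - 2*x + 1)) ≠ 0 := by positivity
    have h1 : HasDerivAt (fun x : ℝ => (2*x-1)/(2*(2*x^2-2*x+1)))
        ((2*(2*(2*x^2-2*x+1)) - (2*x-1)*(2*(4*x-2))) / (2*(2*x^2-2*x+1))^2) x := by
      have hn : HasDerivAt (fun x : ℝ => 2*x-1) 2 x := by
        simpa using ((hasDerivAt_id x).const_mul 2).sub_const 1
      have hd : HasDerivAt (fun x : ℝ => 2*(2*x^2-2*x+1)) (2*(4*x-2)) x := by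
        have : HasDerivAt (fun x : ℝ => 2*x^2-2*x+1) (4*x-2) x := by
          have h2 : HasDerivAt (fun x : ℝ => x^2) (2*x) x := by simpa using hasDerivAt_pow 2 x
          have hh := ((h2.const_mul 2).sub (hasDerivAt_id' x |>.const_mul 2)).add_const 1
          refine hh.congr_deriv ?_
          ring
        exact this.const_mul 2
      exact hn.div hd hQQ
    have h2 : HasDerivAt (fun x : ℝ => arctan (2*x-1)) (1/(1+(2*x-1)^2) * 2) x := by
      have hn : HasDerivAt (fun x : ℝ => 2*x-1) 2 x := by
        simpa using ((hasDerivAt_id x).const_mul 2).sub_const 1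
      exact (Real.hasDerivAt_arctan (2*x-1)).comp x hn
    refine (h1.add h2).congr_deriv ?_
    have h3 : (1+(2*x-1)^2) ≠ 0 := by positivity
    have h4 : (1+(2*x-1)^2) = 2 * (2*x^2 - 2*x + 1) := by ring
    rw [h4]
    field_simp
    ring
  have hInt : IntervalIntegrable (fun x : ℝ => (2*x^2 - 2*x + 1)⁻¹ ^ 2) volume 0 1 := by
    apply Continuous.intervalIntegrable
    have : Continuous fun x : ℝ => (2*x^2 - 2*x + 1)⁻¹ :=
      Continuous.inv₀ (by fun_prop) (fun x => (Qpos x).ne')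
    fun_prop
  rw [integral_eq_sub_of_hasDerivAt hG hInt]
  norm_num [Real.arctan_one, Real.arctan_neg]
  ring

lemma hasSum_succ_geom {t : ℝ} (ht : |t| < 1) :
    HasSum (fun k : ℕ => ((k:ℝ)+1) * t ^ k) ((1-t)⁻¹^2) := by
  have ht' : ‖t‖ < 1 := by simpa using ht
  have A := hasSum_coe_mul_geometric_of_norm_lt_one ht'
  have B := hasSum_geometric_of_norm_lt_one ht'
  have h1t : (1:ℝ) - t ≠ 0 := by
    have : t < 1 := lt_of_le_of_lt (le_abs_self t) ht
    linarith
  convert A.add B using 2 with k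
  · rfl
  · ring
  · field_simp
    ring

lemma term_eq (k : ℕ) :
    ((k:ℝ)+1) * (2^k * ((k.factorial * k.factorial : ℝ) / ((k + k + 1).factorial)))
      = (Nat.factorial (k + 1) : ℝ) / (Nat.doubleFactorial (2 * k + 1) : ℝ) := by
  have hfac : ((2*k+1).factorial : ℝ)
      = ((2*k+1).doubleFactorial : ℝ) * (2^k * k.factorial) := by
    have h1 : (2*k+1).factorial = (2*k+1).doubleFactorial * (2*k).doubleFactorial :=
      Nat.factorial_eq_mul_doubleFactorial (2*k)
    have h2 : (2*k).doubleFactorial = 2^k * k.factorial := Nat.doubleFactorial_two_mul k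
    rw [h1, h2]
    push_cast
    ring
  have hkk : k + k + 1 = 2*k+1 := by omega
  rw [hkk, hfac, Nat.factorial_succ k]
  have d0 : ((2*k+1).doubleFactorial : ℝ) ≠ 0 := by
    exact_mod_cast (Nat.doubleFactorial_pos _).ne'
  have f0 : ((k.factorial : ℝ)) ≠ 0 := by exact_mod_cast k.factorial_pos.ne'
  have p0 : ((2:ℝ)^k) ≠ 0 := by positivity
  push_cast
  field_simp

theorem stmt2 :
    Tendsto (fun N => ∑ k ∈ Ico 1 N,
      (Nat.factorial (k + 1) : ℝ) / (Nat.doubleFactorial (2 * k + 1) : ℝ))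
      atTop (nhds (Real.pi / 2)) := by
  set μ : Measure ℝ := volume.restrict (Set.Ioc (0:ℝ) 1) with hμ
  set f : ℕ → ℝ → ℝ := fun N x => ∑ k ∈ Ico 1 N, ((k:ℝ)+1) * (2*x*(1-x))^k with hf
  set F : ℝ → ℝ := fun x => (2*x^2 - 2*x + 1)⁻¹ ^ 2 - 1 with hF
  have hfc : ∀ N, Continuous (f N) := by
    intro N
    apply continuous_finset_sum
    intro k _
    fun_prop
  have hFc : Continuous F := by
    have : Continuous fun x : ℝ => (2*x^2 - 2*x + 1)⁻¹ :=
      Continuous.inv₀ (by fun_prop) (fun x => (Qpos x).ne')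
    fun_prop
  have hf_int : ∀ N, Integrable (f N) μ := fun N => (hfc N).integrableOn_Ioc
  have hF_int : Integrable F μ := hFc.integrableOn_Ioc
  have h_mono : ∀ᵐ x ∂μ, Monotone fun N => f N x := by
    filter_upwards [ae_restrict_mem measurableSet_Ioc] with x hx
    intro m n hmn
    apply Finset.sum_le_sum_of_subset_of_nonneg (Finset.Ico_subset_Ico le_rfl hmn)
    intro k _ _
    have h1 : (0:ℝ) ≤ 2*x*(1-x) := by nlinarith [hx.1, hx.2]
    positivity
  have h_tendsto : ∀ᵐ x ∂μ, Tendsto (fun N => f N x) atTop (nhds (F x)) := by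
    filter_upwards [ae_restrict_mem measurableSet_Ioc] with x hx
    have h1 : (0:ℝ) ≤ 2*x*(1-x) := by nlinarith [hx.1, hx.2]
    have h2 : 2*x*(1-x) ≤ 1/2 := by nlinarith [sq_nonneg (2*x-1)]
    have ht : |2*x*(1-x)| < 1 := by rw [abs_of_nonneg h1]; linarith
    have hs := (hasSum_succ_geom ht).tendsto_sum_nat
    have heq : (1 - 2*x*(1-x))⁻¹^2 = (2*x^2 - 2*x + 1)⁻¹ ^ 2 := by ring_nf
    rw [heq] at hs
    have hsub : Tendsto (fun N => (∑ k ∈ range N, ((k:ℝ)+1) * (2*x*(1-x))^k) - 1)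
        atTop (nhds ((2*x^2 - 2*x + 1)⁻¹ ^ 2 - 1)) := hs.sub_const 1
    apply hsub.congr'
    filter_upwards [eventually_ge_atTop 1] with N hN
    simp only [hf]
    rw [Finset.range_eq_Ico, Finset.sum_eq_sum_Ico_succ_bot (by omega : 0 < N)]
    simp
  have hMCT := integral_tendsto_of_tendsto_of_monotone hf_int hF_int h_mono h_tendsto
  have hFval : ∫ x, F x ∂μ = π/2 := by
    have : ∫ x, F x ∂μ = ∫ x in (0:ℝ)..1, F x := (integral_of_le zero_le_one).symm
    rw [this, hF]
    have hInt1 : IntervalIntegrable (fun x : ℝ => (2*x^2 - 2*x + 1)⁻¹ ^ 2) volume 0 1 := by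
      apply Continuous.intervalIntegrable
      have : Continuous fun x : ℝ => (2*x^2 - 2*x + 1)⁻¹ :=
        Continuous.inv₀ (by fun_prop) (fun x => (Qpos x).ne')
      fun_prop
    rw [integral_sub hInt1 (intervalIntegrable_const), ftc_int]
    simp
  have hfval : ∀ N, ∫ x, f N x ∂μ = ∑ k ∈ Ico 1 N,
      (Nat.factorial (k + 1) : ℝ) / (Nat.doubleFactorial (2 * k + 1) : ℝ) := by
    intro N
    have h0 : ∫ x, f N x ∂μ = ∫ x in (0:ℝ)..1, f N x := (integral_of_le zero_le_one).symm
    rw [h0]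
    simp only [hf]
    rw [intervalIntegral.integral_finset_sum]
    · apply Finset.sum_congr rfl
      intro k _
      rw [intervalIntegral.integral_const_mul]
      have : (∫ x in (0:ℝ)..1, (2*x*(1-x))^k)
          = ∫ x in (0:ℝ)..1, (2:ℝ)^k * (x^k * (1-x)^k) := by
        apply intervalIntegral.integral_congr
        intro x _
        simp only [← mul_pow]
        congr 1
        ring
      rw [this, intervalIntegral.integral_const_mul, beta_nat k k]
      exact term_eq k
    · intro k _
      apply Continuous.intervalIntegrable
      fun_prop
  convert hMCT using 2 with N
  · exact (hfval N).symm
  · exact hFval.symm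
end

section
/- The infinite series ∑_{k=1}^∞ (k!)²·(3k+2)/(2k+1)! converges to 2π/(3√3). -/
open Filter Finset Real

noncomputable def cc (k : ℕ) : ℝ := (Nat.factorial k : ℝ)^2 / (Nat.factorial (2*k+1) : ℝ)
noncomputable def aa (k : ℕ) : ℝ := (Nat.factorial k : ℝ)^2 / (Nat.factorial (2*k) : ℝ)

lemma asc_prod (m : ℕ) : ∀ n : ℕ, n.ascFactorial m = ∏ j ∈ range m, (n + j) := by
  induction m with
  | zero => simp
  | succ m ih => intro n; rw [Nat.ascFactorial_succ, Finset.prod_range_succ, ← ih n]; ring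

lemma beta_eval (k : ℕ) : ∫ x in (0:ℝ)..1, (x * (1 - x))^k = cc k := by
  have hu : 0 < Complex.re ((k:ℂ)+1) := by simp; positivity
  have h := Complex.betaIntegral_eval_nat_add_one_right hu k
  rw [Complex.betaIntegral] at h
  have hprod : ∏ j ∈ range (k+1), ((k:ℂ) + 1 + j) = ((Nat.factorial (2*k+1) : ℝ) / (Nat.factorial k : ℝ) : ℝ) := by
    have hnat : Nat.factorial k * (k+1).ascFactorial (k+1) = Nat.factorial (2*k+1) := by
      have := Nat.factorial_mul_ascFactorial k (k+1)
      rw [this]; congr 1; ring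
    rw [asc_prod] at hnat
    have hcst : ((∏ j ∈ range (k+1), (k + 1 + j) : ℕ) : ℂ) = ∏ j ∈ range (k+1), ((k:ℂ) + 1 + j) := by
      push_cast; rfl
    rw [← hcst]
    have hk : (Nat.factorial k : ℝ) ≠ 0 := by positivity
    rw [eq_comm]
    push_cast
    rw [div_eq_iff (by exact_mod_cast hk), ← hnat]
    push_cast; ring
  rw [hprod] at h
  have hint : (∫ (x : ℝ) in (0:ℝ)..1, ((x:ℂ)) ^ ((k:ℂ) + 1 - 1) * (1 - (x:ℂ)) ^ ((k:ℂ) + 1 - 1))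
      = ((∫ x in (0:ℝ)..1, (x*(1-x))^k : ℝ) : ℂ) := by
    rw [← intervalIntegral.integral_ofReal]
    apply intervalIntegral.integral_congr
    intro x hx
    simp only [add_sub_cancel_right, Complex.cpow_natCast]
    push_cast
    rw [← mul_pow]
  rw [hint, show ((k.factorial:ℂ)) = ((k.factorial : ℝ) : ℂ) from by push_cast; rfl,
    ← Complex.ofReal_div] at h
  have h2 : (∫ x in (0:ℝ)..1, (x*(1-x))^k : ℝ)
      = (k.factorial : ℝ) / ((Nat.factorial (2*k+1) : ℝ) / (Nat.factorial k : ℝ)) := by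
    exact_mod_cast h
  rw [h2, cc]
  have h3 : (Nat.factorial k : ℝ) ≠ 0 := by positivity
  have h4 : (Nat.factorial (2*k+1) : ℝ) ≠ 0 := by positivity
  field_simp

lemma q_pos (x : ℝ) : 0 < x^2 - x + 1 := by nlinarith [sq_nonneg (x - 1/2)]

lemma t_ne_one (x : ℝ) : x * (1 - x) ≠ 1 := by nlinarith [sq_nonneg (x - 1/2)]

lemma L_val : (∫ x in (0:ℝ)..1, 1/(x^2-x+1)) = 2*π/(3*Real.sqrt 3) := by
  have h3 : Real.sqrt 3 ≠ 0 := by positivity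
  have hsq : Real.sqrt 3 ^ 2 = 3 := Real.sq_sqrt (by norm_num)
  have hder : ∀ x ∈ Set.uIcc (0:ℝ) 1, HasDerivAt
      (fun x : ℝ => 2/Real.sqrt 3 * Real.arctan ((2*x-1)/Real.sqrt 3)) (1/(x^2-x+1)) x := by
    intro x _
    have hg : HasDerivAt (fun x : ℝ => (2*x-1)/Real.sqrt 3) (2/Real.sqrt 3) x := by
      simpa using (((hasDerivAt_id x).const_mul 2).sub_const 1).div_const (Real.sqrt 3)
    have ha := (Real.hasDerivAt_arctan ((2*x-1)/Real.sqrt 3)).comp x hg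
    have hd := ha.const_mul (2/Real.sqrt 3)
    refine hd.congr_deriv ?_
    have hq : (x^2 - x + 1) ≠ 0 := (q_pos x).ne'
    have e2 : 2/Real.sqrt 3 * (1/(1+((2*x-1)/Real.sqrt 3)^2) * (2/Real.sqrt 3))
        = 4/3 * (1/(1+(2*x-1)^2/3)) := by
      rw [div_pow, hsq]
      have hne : (0:ℝ) < 1 + (2*x-1)^2/3 := by positivity
      field_simp
      linear_combination (-4) * hsq
    rw [e2, show ((1:ℝ)+(2*x-1)^2/3) = 4/3*(x^2-x+1) by ring]
    field_simp
  have hint : IntervalIntegrable (fun x : ℝ => 1/(x^2-x+1)) MeasureTheory.volume 0 1 := by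
    apply Continuous.intervalIntegrable
    exact continuous_const.div (by continuity) (fun x => (q_pos x).ne')
  rw [intervalIntegral.integral_eq_sub_of_hasDerivAt (fun x hx => hder x hx) hint]
  have harc : Real.arctan (Real.sqrt 3)⁻¹ = π/6 := by
    rw [show (Real.sqrt 3)⁻¹ = Real.tan (π/6) by rw [Real.tan_pi_div_six]; ring,
      Real.arctan_tan] <;> linarith [Real.pi_pos]
  have e1 : (2*(1:ℝ)-1)/Real.sqrt 3 = (Real.sqrt 3)⁻¹ := by ring
  have e0 : (2*(0:ℝ)-1)/Real.sqrt 3 = -(Real.sqrt 3)⁻¹ := by ring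
  simp only [e1, e0, Real.arctan_neg, harc]
  field_simp
  ring

lemma sum_c (N : ℕ) : ∑ k ∈ range N, cc k
    = (∫ x in (0:ℝ)..1, 1/(x^2-x+1)) - ∫ x in (0:ℝ)..1, (x*(1-x))^N/(x^2-x+1) := by
  have hi1 : ∀ k : ℕ, IntervalIntegrable (fun x : ℝ => (x*(1-x))^k) MeasureTheory.volume 0 1 :=
    fun k => (by continuity : Continuous fun x : ℝ => (x*(1-x))^k).intervalIntegrable _ _
  have hi2 : IntervalIntegrable (fun x : ℝ => 1/(x^2-x+1)) MeasureTheory.volume 0 1 :=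
    (continuous_const.div (by continuity) (fun x => (q_pos x).ne')).intervalIntegrable _ _
  have hi3 : IntervalIntegrable (fun x : ℝ => (x*(1-x))^N/(x^2-x+1)) MeasureTheory.volume 0 1 :=
    ((by continuity : Continuous fun x : ℝ => (x*(1-x))^N).div (by continuity)
      (fun x => (q_pos x).ne')).intervalIntegrable _ _
  have h1 : ∑ k ∈ range N, cc k = ∫ x in (0:ℝ)..1, ∑ k ∈ range N, (x*(1-x))^k := by
    rw [intervalIntegral.integral_finset_sum (fun k _ => hi1 k)]
    exact (Finset.sum_congr rfl (fun k _ => (beta_eval k).symm))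
  rw [h1, ← intervalIntegral.integral_sub hi2 hi3]
  apply intervalIntegral.integral_congr
  intro x _
  simp only []
  rw [geom_sum_eq (t_ne_one x)]
  have h2 : x^2 - x + 1 ≠ 0 := (q_pos x).ne'
  have h4 : x * (1-x) - 1 ≠ 0 := by intro h; exact (t_ne_one x) (by linarith)
  field_simp
  rw [eq_div_iff (by rw [show x*(x-1)+1 = x^2-x+1 by ring]; exact h2)]
  ring

lemma E_bound (N : ℕ) : ‖∫ x in (0:ℝ)..1, (x*(1-x))^N/(x^2-x+1)‖ ≤ 4/3 * (1/4)^N := by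
  have hi3 : IntervalIntegrable (fun x : ℝ => (x*(1-x))^N/(x^2-x+1)) MeasureTheory.volume 0 1 :=
    ((by continuity : Continuous fun x : ℝ => (x*(1-x))^N).div (by continuity)
      (fun x => (q_pos x).ne')).intervalIntegrable _ _
  have hup : ∀ x ∈ Set.Icc (0:ℝ) 1, (x*(1-x))^N/(x^2-x+1) ≤ 4/3 * (1/4)^N := by
    intro x hx
    obtain ⟨h0, h1⟩ := hx
    have ht0 : 0 ≤ x * (1-x) := mul_nonneg h0 (by linarith)
    have ht4 : x * (1-x) ≤ 1/4 := by nlinarith [sq_nonneg (x - 1/2)]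
    have hq : (3:ℝ)/4 ≤ x^2 - x + 1 := by nlinarith [sq_nonneg (x - 1/2)]
    have hpow : (x*(1-x))^N ≤ (1/4)^N := pow_le_pow_left₀ ht0 ht4 N
    calc (x*(1-x))^N/(x^2-x+1) ≤ (1/4)^N/(3/4) :=
          div_le_div₀ (by positivity) hpow (by norm_num) hq
      _ = 4/3 * (1/4)^N := by ring
  have hlo : ∀ x ∈ Set.Icc (0:ℝ) 1, 0 ≤ (x*(1-x))^N/(x^2-x+1) := by
    intro x hx
    obtain ⟨h0, h1⟩ := hx
    exact div_nonneg (pow_nonneg (mul_nonneg h0 (by linarith)) N) (q_pos x).le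
  have hnn : 0 ≤ ∫ x in (0:ℝ)..1, (x*(1-x))^N/(x^2-x+1) :=
    intervalIntegral.integral_nonneg zero_le_one hlo
  rw [Real.norm_eq_abs, abs_of_nonneg hnn]
  calc (∫ x in (0:ℝ)..1, (x*(1-x))^N/(x^2-x+1))
      ≤ ∫ _x in (0:ℝ)..1, 4/3 * (1/4:ℝ)^N :=
        intervalIntegral.integral_mono_on zero_le_one hi3 intervalIntegrable_const hup
    _ = 4/3 * (1/4)^N := by simp

lemma tends_c : Tendsto (fun N => ∑ k ∈ range N, cc k) atTop (nhds (2*π/(3*Real.sqrt 3))) := by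
  have hE : Tendsto (fun N => ∫ x in (0:ℝ)..1, (x*(1-x))^N/(x^2-x+1)) atTop (nhds 0) := by
    apply squeeze_zero_norm E_bound
    have := (tendsto_pow_atTop_nhds_zero_of_lt_one (by norm_num : (0:ℝ) ≤ 1/4)
      (by norm_num : (1/4:ℝ) < 1)).const_mul (4/3:ℝ)
    simpa using this
  have := (tendsto_const_nhds (x := (∫ x in (0:ℝ)..1, 1/(x^2-x+1))) (f := atTop)).sub hE
  rw [sub_zero] at this
  simp only [funext sum_c]
  rw [← L_val]
  exact this

lemma key (k : ℕ) : (Nat.factorial k : ℝ)^2 * (3*(k:ℝ)+2) / (Nat.factorial (2*k+1) : ℝ)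
    = 2*(aa k - aa (k+1)) + cc k := by
  unfold aa cc
  have e1 : (Nat.factorial (2*(k+1)) : ℝ) = (2*(k:ℝ)+2)*((2*(k:ℝ)+1)*(Nat.factorial (2*k) : ℝ)) := by
    rw [show 2*(k+1) = (2*k+1)+1 by ring, Nat.factorial_succ, Nat.factorial_succ]
    push_cast; ring
  have e2 : (Nat.factorial (2*k+1) : ℝ) = (2*(k:ℝ)+1)*(Nat.factorial (2*k) : ℝ) := by
    rw [Nat.factorial_succ]; push_cast; ring
  have e3 : (Nat.factorial (k+1) : ℝ) = ((k:ℝ)+1)*(Nat.factorial k : ℝ) := by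
    rw [Nat.factorial_succ]; push_cast; ring
  rw [e1, e2, e3]
  have h1 : (Nat.factorial k : ℝ) ≠ 0 := by positivity
  have h2 : (Nat.factorial (2*k) : ℝ) ≠ 0 := by positivity
  have h3 : (2*(k:ℝ)+1) ≠ 0 := by positivity
  have h4 : (2*(k:ℝ)+2) ≠ 0 := by positivity
  field_simp
  ring

lemma aa_succ (k : ℕ) : aa (k+1) = aa k * (((k:ℝ)+1)/(2*(2*(k:ℝ)+1))) := by
  unfold aa
  have e1 : (Nat.factorial (2*(k+1)) : ℝ) = (2*(k:ℝ)+2)*((2*(k:ℝ)+1)*(Nat.factorial (2*k) : ℝ)) := by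
    rw [show 2*(k+1) = (2*k+1)+1 by ring, Nat.factorial_succ, Nat.factorial_succ]
    push_cast; ring
  have e3 : (Nat.factorial (k+1) : ℝ) = ((k:ℝ)+1)*(Nat.factorial k : ℝ) := by
    rw [Nat.factorial_succ]; push_cast; ring
  rw [e1, e3]
  have h1 : (Nat.factorial k : ℝ) ≠ 0 := by positivity
  have h2 : (Nat.factorial (2*k) : ℝ) ≠ 0 := by positivity
  have h3 : (2*(k:ℝ)+1) ≠ 0 := by positivity
  have h4 : (2*(k:ℝ)+2) ≠ 0 := by positivity
  field_simp

lemma aa_nonneg (k : ℕ) : 0 ≤ aa k := by unfold aa; positivity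

lemma aa_le (N : ℕ) : aa N ≤ (1/2)^N := by
  induction N with
  | zero => unfold aa; norm_num [Nat.factorial]
  | succ k ih =>
    rw [aa_succ]
    have hr : ((k:ℝ)+1)/(2*(2*(k:ℝ)+1)) ≤ 1/2 := by
      rw [div_le_div_iff₀ (by positivity) (by norm_num)]
      nlinarith [Nat.cast_nonneg (α := ℝ) k]
    calc aa k * (((k:ℝ)+1)/(2*(2*(k:ℝ)+1))) ≤ (1/2)^k * (1/2) := by
          apply mul_le_mul ih hr (by positivity) (by positivity)
      _ = (1/2)^(k+1) := by ring

lemma tends_aa : Tendsto aa atTop (nhds 0) := by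
  apply squeeze_zero aa_nonneg aa_le
  exact tendsto_pow_atTop_nhds_zero_of_lt_one (by norm_num) (by norm_num)

theorem stmt8 :
    Tendsto (fun N => ∑ k ∈ Ico 1 N,
      ((Nat.factorial k : ℝ))^2 * (3 * (k : ℝ) + 2) / (Nat.factorial (2 * k + 1) : ℝ))
      atTop (nhds (2 * Real.pi / (3 * Real.sqrt 3))) := by
  have haa1 : aa 1 = 1/2 := by unfold aa; norm_num [Nat.factorial]
  have hcc0 : cc 0 = 1 := by unfold cc; norm_num [Nat.factorial]
  have hmain : Tendsto (fun N => 2*(aa 1 - aa N) + ((∑ k ∈ range N, cc k) - cc 0)) atTop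
      (nhds (2*π/(3*Real.sqrt 3))) := by
    have h := (((tendsto_const_nhds (x := aa 1)).sub tends_aa).const_mul 2).add (tends_c.sub_const (cc 0))
    convert h using 2
    rw [haa1, hcc0]
    ring
  apply hmain.congr'
  filter_upwards [eventually_ge_atTop 1] with N hN
  have hts : ∑ k ∈ Ico 1 N, (2*(aa k - aa (k+1)) + cc k)
      = 2*(aa 1 - aa N) + ((∑ k ∈ range N, cc k) - cc 0) := by
    rw [Finset.sum_add_distrib]
    congr 1
    · rw [Finset.sum_Ico_eq_sum_range, ← Finset.mul_sum]
      have hts2 := Finset.sum_range_sub' (fun i => aa (1+i)) (N-1)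
      have hN1 : 1 + (N - 1) = N := by omega
      rw [show (∑ i ∈ range (N-1), (aa (1+i) - aa (1+i+1)))
          = ∑ i ∈ range (N-1), (aa (1+i) - aa (1+(i+1))) from
          Finset.sum_congr rfl (fun i _ => by ring_nf), hts2, hN1]
    · rw [Finset.sum_Ico_eq_sub _ hN, Finset.sum_range_one]
  rw [← Finset.sum_congr rfl (fun k _ => key k)] at hts
  exact hts.symm
end

section
/- The infinite series ∑_{k=2}^∞ (k!)²·k·(3k+1)/(2k+1)! converges to 4π/(9√3). -/
open Filter Finset Real

lemma quad_pos (x : ℝ) : 0 < x ^ 2 - x + 1 := by nlinarith [sq_nonneg (x - 1/2)]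

lemma prod_fact (m : ℕ) : ∀ n : ℕ, m.factorial * ∏ j ∈ range n, (m + 1 + j) = (m + n).factorial
  | 0 => by simp
  | n + 1 => by
    rw [Finset.prod_range_succ, ← mul_assoc, prod_fact m n, ← Nat.add_assoc]
    rw [Nat.factorial_succ]; ring

lemma beta_real (k : ℕ) : ∫ x in (0:ℝ)..1, x ^ k * (1 - x) ^ k
    = (k.factorial : ℝ) ^ 2 / ((2 * k + 1).factorial : ℝ) := by
  have hu : 0 < Complex.re ((k : ℂ) + 1) := by
    simp [Complex.add_re]
    positivity
  have h := Complex.betaIntegral_eval_nat_add_one_right hu k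
  rw [Complex.betaIntegral] at h
  have h2 : ∀ x : ℝ, ((x : ℂ)) ^ ((k : ℂ) + 1 - 1) * (1 - (x : ℂ)) ^ ((k : ℂ) + 1 - 1)
      = ((x ^ k * (1 - x) ^ k : ℝ) : ℂ) := by
    intro x
    rw [add_sub_cancel_right, Complex.cpow_natCast, Complex.cpow_natCast]
    push_cast
    ring
  rw [intervalIntegral.integral_congr (fun x _ => h2 x), intervalIntegral.integral_ofReal] at h
  have h3 : ∏ j ∈ range (k + 1), ((k : ℂ) + 1 + j) = ((2 * k + 1).factorial / k.factorial : ℝ) := by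
    have := prod_fact k (k + 1)
    have h4 : ((k.factorial * ∏ j ∈ range (k + 1), (k + 1 + j) : ℕ) : ℂ)
        = ((k + (k + 1)).factorial : ℕ) := by exact_mod_cast this
    push_cast at h4 ⊢
    rw [eq_div_iff (by exact_mod_cast Nat.cast_ne_zero.2 k.factorial_ne_zero), mul_comm]
    rw [show 2 * k + 1 = k + (k + 1) by ring]
    exact h4
  rw [h3] at h
  have h5 : ((∫ x in (0:ℝ)..1, x ^ k * (1 - x) ^ k : ℝ) : ℂ)
      = (((k.factorial : ℝ) ^ 2 / ((2 * k + 1).factorial : ℝ) : ℝ) : ℂ) := by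
    rw [h]
    push_cast
    rw [div_div_eq_mul_div]
    ring_nf
  exact_mod_cast h5

lemma arctan_sqrt3 : Real.arctan (1 / Real.sqrt 3) = π / 6 := by
  rw [← Real.tan_pi_div_six, Real.arctan_tan] <;> linarith [Real.pi_pos]

lemma I_val : ∫ x in (0:ℝ)..1, 1 / (x ^ 2 - x + 1) = 2 * π / (3 * Real.sqrt 3) := by
  have s3 : (0:ℝ) < Real.sqrt 3 := Real.sqrt_pos.2 (by norm_num)
  have s3sq : Real.sqrt 3 ^ 2 = 3 := Real.sq_sqrt (by norm_num)
  have hderiv : ∀ x ∈ Set.uIcc (0:ℝ) 1,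
      HasDerivAt (fun x : ℝ => 2 / Real.sqrt 3 * Real.arctan ((2 * x - 1) / Real.sqrt 3))
        (1 / (x ^ 2 - x + 1)) x := by
    intro x _
    have h1 : HasDerivAt (fun x : ℝ => (2 * x - 1) / Real.sqrt 3) (2 / Real.sqrt 3) x := by
      simpa using (((hasDerivAt_id x).const_mul 2).sub_const 1).div_const (Real.sqrt 3)
    have h2 := (h1.arctan).const_mul (2 / Real.sqrt 3)
    refine h2.congr_deriv (Eq.symm ?_)
    have hq := quad_pos x
    field_simp
    rw [s3sq, div_eq_iff (by nlinarith)]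
    ring
  have hint : IntervalIntegrable (fun x : ℝ => 1 / (x ^ 2 - x + 1)) MeasureTheory.volume 0 1 := by
    apply Continuous.intervalIntegrable
    exact continuous_const.div (by continuity) (fun x => (quad_pos x).ne')
  rw [intervalIntegral.integral_eq_sub_of_hasDerivAt hderiv hint]
  have e1 : (2 * (1:ℝ) - 1) / Real.sqrt 3 = 1 / Real.sqrt 3 := by norm_num
  have e0 : (2 * (0:ℝ) - 1) / Real.sqrt 3 = -(1 / Real.sqrt 3) := by ring
  rw [e1, e0, Real.arctan_neg, arctan_sqrt3]
  field_simp
  ring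

noncomputable def T (N : ℕ) : ℝ := ∑ k ∈ range N, (k.factorial : ℝ) ^ 2 / ((2 * k + 1).factorial : ℝ)

lemma T_eq (N : ℕ) : T N = ∫ x in (0:ℝ)..1, (1 - (x * (1 - x)) ^ N) / (x ^ 2 - x + 1) := by
  have hcont : ∀ k : ℕ, IntervalIntegrable (fun x : ℝ => x ^ k * (1 - x) ^ k)
      MeasureTheory.volume 0 1 := fun k => (by continuity : Continuous fun x : ℝ => x ^ k * (1 - x) ^ k).intervalIntegrable 0 1
  have h1 : T N = ∫ x in (0:ℝ)..1, ∑ k ∈ range N, x ^ k * (1 - x) ^ k := by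
    rw [intervalIntegral.integral_finset_sum (fun k _ => hcont k)]
    simp only [T, beta_real]
  rw [h1]
  apply intervalIntegral.integral_congr
  intro x _
  have hne : x * (1 - x) ≠ 1 := by nlinarith [sq_nonneg (x - 1/2)]
  have := geom_sum_eq hne N
  simp only [mul_pow] at this ⊢
  rw [this]
  have hq := quad_pos x
  rw [div_eq_div_iff (by nlinarith) (by positivity)]
  ring

lemma T_tendsto : Tendsto T atTop (nhds (2 * π / (3 * Real.sqrt 3))) := by
  have key : ∀ N : ℕ, ‖T N - 2 * π / (3 * Real.sqrt 3)‖ ≤ (4/3) * (1/4:ℝ) ^ N := by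
    intro N
    rw [← I_val, T_eq]
    have hi1 : IntervalIntegrable (fun x : ℝ => (1 - (x * (1 - x)) ^ N) / (x ^ 2 - x + 1))
        MeasureTheory.volume 0 1 :=
      ((by continuity : Continuous fun x : ℝ => 1 - (x * (1 - x)) ^ N).div
        (by continuity) (fun x => (quad_pos x).ne')).intervalIntegrable 0 1
    have hi2 : IntervalIntegrable (fun x : ℝ => 1 / (x ^ 2 - x + 1))
        MeasureTheory.volume 0 1 :=
      (continuous_const.div (by continuity) (fun x => (quad_pos x).ne')).intervalIntegrable 0 1
    rw [← intervalIntegral.integral_sub hi1 hi2]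
    have hb : ∀ x ∈ Set.uIoc (0:ℝ) 1,
        ‖(1 - (x * (1 - x)) ^ N) / (x ^ 2 - x + 1) - 1 / (x ^ 2 - x + 1)‖ ≤ (4/3) * (1/4:ℝ) ^ N := by
      intro x hx
      rw [Set.uIoc_of_le (by norm_num : (0:ℝ) ≤ 1)] at hx
      obtain ⟨hx0, hx1⟩ := hx
      have hq := quad_pos x
      have ht0 : 0 ≤ x * (1 - x) := by nlinarith
      have ht4 : x * (1 - x) ≤ 1/4 := by nlinarith [sq_nonneg (x - 1/2)]
      have hq34 : (3/4:ℝ) ≤ x ^ 2 - x + 1 := by nlinarith [sq_nonneg (x - 1/2)]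
      have heq : (1 - (x * (1 - x)) ^ N) / (x ^ 2 - x + 1) - 1 / (x ^ 2 - x + 1)
          = -((x * (1 - x)) ^ N / (x ^ 2 - x + 1)) := by field_simp; ring
      rw [heq, norm_neg, Real.norm_eq_abs, abs_of_nonneg (by positivity)]
      have h1 : (x * (1 - x)) ^ N ≤ (1/4:ℝ) ^ N := pow_le_pow_left₀ ht0 ht4 N
      calc (x * (1 - x)) ^ N / (x ^ 2 - x + 1) ≤ (1/4:ℝ) ^ N / (3/4) := by
            apply div_le_div₀ (by positivity) h1 (by norm_num) hq34
        _ = (4/3) * (1/4:ℝ) ^ N := by ring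
    have := intervalIntegral.norm_integral_le_of_norm_le_const hb
    simpa using this
  have hg : Tendsto (fun N : ℕ => (4/3) * (1/4:ℝ) ^ N) atTop (nhds 0) := by
    have := tendsto_pow_atTop_nhds_zero_of_lt_one (by norm_num : (0:ℝ) ≤ 1/4) (by norm_num)
    simpa using this.const_mul (4/3:ℝ)
  have h0 : Tendsto (fun N => T N - 2 * π / (3 * Real.sqrt 3)) atTop (nhds 0) :=
    squeeze_zero_norm key hg
  have := h0.add_const (2 * π / (3 * Real.sqrt 3))
  simpa using this

noncomputable def bb (k : ℕ) : ℝ := (k.factorial : ℝ) ^ 2 * (6 * k + 2) / (3 * ((2 * k).factorial : ℝ))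

lemma bb_tendsto : Tendsto bb atTop (nhds 0) := by
  have key : ∀ n : ℕ, 1 ≤ n → bb n ≤ 4 * ((n:ℝ)^2 * (1/4:ℝ)^n) + (4/3) * ((n:ℝ)^1 * (1/4:ℝ)^n) := by
    intro n hn
    have h1 : 4 ^ n ≤ 2 * n * n.centralBinom := Nat.four_pow_le_two_mul_self_mul_centralBinom n hn
    have h2 : n.centralBinom * (n.factorial * n.factorial) = (2 * n).factorial := by
      have := Nat.choose_mul_factorial_mul_factorial (show n ≤ 2 * n by omega)
      rw [show 2 * n - n = n by omega] at this
      rw [Nat.centralBinom, ← this]; ring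
    have h3 : n.factorial ^ 2 * 4 ^ n ≤ 2 * n * (2 * n).factorial := by
      calc n.factorial ^ 2 * 4 ^ n ≤ n.factorial ^ 2 * (2 * n * n.centralBinom) :=
            Nat.mul_le_mul_left _ h1
        _ = 2 * n * (2 * n).factorial := by rw [← h2]; ring
    have h3' : ((n.factorial : ℝ)) ^ 2 * 4 ^ n ≤ 2 * n * ((2 * n).factorial : ℝ) := by
      exact_mod_cast h3
    have hfpos : (0:ℝ) < ((2 * n).factorial : ℝ) := by positivity
    have h4pos : (0:ℝ) < 4 ^ n := by positivity
    have hb : bb n ≤ (6 * n + 2) * (2 * n) / (3 * 4 ^ n) := by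
      rw [bb, div_le_div_iff₀ (by positivity) (by positivity)]
      nlinarith [h3', hfpos, (show (0:ℝ) ≤ 6 * (n:ℝ) + 2 by positivity)]
    calc bb n ≤ (6 * n + 2) * (2 * n) / (3 * 4 ^ n) := hb
      _ = 4 * ((n:ℝ)^2 * (1/4:ℝ)^n) + (4/3) * ((n:ℝ)^1 * (1/4:ℝ)^n) := by
          rw [div_eq_iff (by positivity)]
          have : (1/4:ℝ)^n * 4 ^ n = 1 := by
            rw [← mul_pow]; norm_num
          field_simp
          nlinarith [this]
  have hr : ‖(1/4:ℝ)‖ < 1 := by rw [Real.norm_eq_abs, abs_of_nonneg] <;> norm_num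
  have hg2 : Tendsto (fun n : ℕ => ((n:ℝ))^2 * (1/4:ℝ)^n) atTop (nhds 0) :=
    (summable_pow_mul_geometric_of_norm_lt_one 2 hr).tendsto_atTop_zero
  have hg1 : Tendsto (fun n : ℕ => ((n:ℝ))^1 * (1/4:ℝ)^n) atTop (nhds 0) :=
    (summable_pow_mul_geometric_of_norm_lt_one 1 hr).tendsto_atTop_zero
  have hg : Tendsto (fun n : ℕ => 4 * ((n:ℝ)^2 * (1/4:ℝ)^n) + (4/3) * ((n:ℝ)^1 * (1/4:ℝ)^n))
      atTop (nhds 0) := by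
    have := (hg2.const_mul 4).add (hg1.const_mul (4/3))
    simpa using this
  apply squeeze_zero' ?_ ?_ hg
  · filter_upwards with n
    unfold bb
    positivity
  · filter_upwards [eventually_ge_atTop 1] with n hn using key n hn

lemma step (k : ℕ) :
    ((Nat.factorial k : ℝ))^2 * (k : ℝ) * (3 * (k : ℝ) + 1) / (Nat.factorial (2 * k + 1) : ℝ)
      = bb k - bb (k + 1) + (2/3) * ((k.factorial : ℝ) ^ 2 / ((2 * k + 1).factorial : ℝ)) := by
  have e1 : (2 * (k + 1)) = (2 * k + 1) + 1 := by ring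
  rw [bb, bb, e1, Nat.factorial_succ ((2*k+1)), Nat.factorial_succ (2*k), Nat.factorial_succ k]
  have hf : (0:ℝ) < ((2 * k).factorial : ℝ) := by positivity
  have hk : (0:ℝ) < (k.factorial : ℝ) := by positivity
  push_cast
  field_simp
  ring

lemma sum_formula (N : ℕ) (hN : 2 ≤ N) :
    ∑ k ∈ Ico 2 N, ((Nat.factorial k : ℝ))^2 * (k : ℝ) * (3 * (k : ℝ) + 1) /
        (Nat.factorial (2 * k + 1) : ℝ)
      = bb 2 - bb N + (2/3) * (T N - T 2) := by
  rw [Finset.sum_congr rfl (fun k _ => step k), Finset.sum_add_distrib, ← Finset.mul_sum]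
  have htel : ∑ k ∈ Ico 2 N, (bb k - bb (k + 1)) = bb 2 - bb N := by
    rw [Finset.sum_Ico_eq_sub _ hN, Finset.sum_range_sub' bb, Finset.sum_range_sub' bb]
    ring
  have hc : ∑ k ∈ Ico 2 N, ((k.factorial : ℝ) ^ 2 / ((2 * k + 1).factorial : ℝ)) = T N - T 2 := by
    rw [T, T, Finset.sum_Ico_eq_sub _ hN]
  rw [htel, hc]

theorem stmt9 :
    Tendsto (fun N => ∑ k ∈ Ico 2 N,
      ((Nat.factorial k : ℝ))^2 * (k : ℝ) * (3 * (k : ℝ) + 1) /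
        (Nat.factorial (2 * k + 1) : ℝ))
      atTop (nhds (4 * Real.pi / (9 * Real.sqrt 3))) := by
  have hlim : Tendsto (fun N => bb 2 - bb N + (2/3) * (T N - T 2)) atTop
      (nhds (bb 2 - 0 + (2/3) * (2 * π / (3 * Real.sqrt 3) - T 2))) := by
    exact (tendsto_const_nhds.sub bb_tendsto).add ((T_tendsto.sub_const (T 2)).const_mul (2/3))
  have hval : bb 2 - 0 + (2/3) * (2 * π / (3 * Real.sqrt 3) - T 2) = 4 * π / (9 * Real.sqrt 3) := by
    have hb2 : bb 2 = 7/9 := by norm_num [bb, Nat.factorial]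
    have hT2 : T 2 = 7/6 := by
      rw [T]
      norm_num [Finset.sum_range_succ, Nat.factorial]
    rw [hb2, hT2]
    have s3 : Real.sqrt 3 ≠ 0 := ne_of_gt (Real.sqrt_pos.2 (by norm_num))
    field_simp
    ring
  rw [← hval]
  apply hlim.congr'
  filter_upwards [eventually_ge_atTop 2] with N hN
  exact (sum_formula N hN).symm
end
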